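/- Let g be convex, λ > 0, f C¹-smooth with ∇f L-Lipschitz, λ⁻¹ > L, and x ∈ ℝⁿ. If p is a δ-minimizer of y ↦ g(y) + (2λ)⁻¹‖y - (x - λ∇f(x))‖², then the forward-backward envelope φ_λ(x) := f(x) - (λ/2)‖∇f(x)‖² + e_λ g(x - λ∇f(x)) satisfies φ_λ(x) ≥ f(p) + g(p) - δ. -/

import Mathlib

open RealInnerProductSpace

/-- Convexity for extended-real-valued functions. -/
def EConvexOn {E : Type*} [NormedAddCommGroup E] [NormedSpace ℝ E] (φ : E → EReal) : Prop :=
  ∀ x y : E, ∀ a b : ℝ, 0 ≤ a → 0 ≤ b → a + b = 1 →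
    φ (a • x + b • y) ≤ (a : EReal) * φ x + (b : EReal) * φ y


lemma descent_lemma {n : ℕ} (f : EuclideanSpace ℝ (Fin n) → ℝ) (hf : ContDiff ℝ 1 f)
    (L : ℝ) (hL : 0 ≤ L)
    (hlip : ∀ x y, ‖gradient f x - gradient f y‖ ≤ L * ‖x - y‖)
    (x y : EuclideanSpace ℝ (Fin n)) :
    f y ≤ f x + ⟪gradient f x, y - x⟫ + L / 2 * ‖y - x‖ ^ 2 := by
  set v := y - x with hv
  have hdiff : Differentiable ℝ f := hf.differentiable one_ne_zero
  set c : ℝ → EuclideanSpace ℝ (Fin n) := fun t => x + t • v with hc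
  have hcd : ∀ t : ℝ, HasDerivAt c v t := by
    intro t
    exact ((hasDerivAt_const t x).add ((hasDerivAt_id t).smul_const v)).congr_deriv (by simp)
  have hfc : ∀ t : ℝ, HasDerivAt (fun s => f (c s)) ⟪gradient f (c t), v⟫ t := by
    intro t
    have h1 : HasFDerivAt f (InnerProductSpace.toDual ℝ _ (gradient f (c t))) (c t) :=
      (hdiff (c t)).hasGradientAt
    exact h1.comp_hasDerivAt t (hcd t)
  set h : ℝ → ℝ := fun t => f (c t) - t * ⟪gradient f x, v⟫ - L / 2 * t ^ 2 * ‖v‖ ^ 2 with hh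
  have hhd : ∀ t : ℝ, HasDerivAt h
      (⟪gradient f (c t), v⟫ - ⟪gradient f x, v⟫ - L * t * ‖v‖ ^ 2) t := by
    intro t
    have h2 : HasDerivAt (fun s : ℝ => s * ⟪gradient f x, v⟫) ⟪gradient f x, v⟫ t := by
      simpa using (hasDerivAt_id t).mul_const ⟪gradient f x, v⟫
    have h3 : HasDerivAt (fun s : ℝ => L / 2 * s ^ 2 * ‖v‖ ^ 2) (L * t * ‖v‖ ^ 2) t := by
      have := (((hasDerivAt_id t).pow 2).const_mul (L / 2)).mul_const (‖v‖ ^ 2)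
      refine this.congr_deriv ?_
      simp only [id_eq, Nat.cast_ofNat, pow_one, mul_one]
      ring
    exact ((hfc t).sub h2).sub h3
  have hdh : Differentiable ℝ h := fun t => (hhd t).differentiableAt
  have hderiv_nonpos : ∀ t ∈ interior (Set.Icc (0:ℝ) 1), deriv h t ≤ 0 := by
    intro t ht
    rw [interior_Icc] at ht
    rw [(hhd t).deriv]
    have key : ⟪gradient f (c t) - gradient f x, v⟫ ≤ L * t * ‖v‖ ^ 2 := by
      calc ⟪gradient f (c t) - gradient f x, v⟫ ≤ ‖gradient f (c t) - gradient f x‖ * ‖v‖ :=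
            real_inner_le_norm _ _
        _ ≤ (L * ‖c t - x‖) * ‖v‖ := by
            have := hlip (c t) x
            nlinarith [norm_nonneg v, norm_nonneg (gradient f (c t) - gradient f x)]
        _ = L * t * ‖v‖ ^ 2 := by
            have : ‖c t - x‖ = |t| * ‖v‖ := by simp [hc, norm_smul]
            rw [this, abs_of_pos ht.1]; ring
    rw [inner_sub_left] at key
    linarith
  have hmono : AntitoneOn h (Set.Icc 0 1) :=
    antitoneOn_of_deriv_nonpos (convex_Icc 0 1) hdh.continuous.continuousOn
      hdh.differentiableOn hderiv_nonpos
  have := hmono (Set.mem_Icc.2 ⟨le_refl 0, zero_le_one⟩)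
    (Set.mem_Icc.2 ⟨zero_le_one, le_refl 1⟩) zero_le_one
  simp only [hh, hc] at this
  simp only [one_smul, zero_smul, add_zero] at this
  have hcy : x + v = y := by simp [hv]
  rw [hcy] at this
  linarith


theorem stmt_18 {n : ℕ} (f : EuclideanSpace ℝ (Fin n) → ℝ) (hf : ContDiff ℝ 1 f)
    (L : ℝ) (hL : 0 < L)
    (hlip : ∀ x y, ‖gradient f x - gradient f y‖ ≤ L * ‖x - y‖)
    (g : EuclideanSpace ℝ (Fin n) → EReal)
    (hproper : (∀ x, g x ≠ ⊥) ∧ ∃ x, g x ≠ ⊤)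
    (hlsc : LowerSemicontinuous g) (hconv : EConvexOn g)
    (lam : ℝ) (hlam : 0 < lam) (hlamL : lam * L < 1)
    (x : EuclideanSpace ℝ (Fin n)) (δ : ℝ) (hδ : 0 ≤ δ)
    (p : EuclideanSpace ℝ (Fin n))
    (hp : g p + (((2 * lam)⁻¹ * ‖p - (x - lam • gradient f x)‖ ^ 2 : ℝ) : EReal) ≤
      (⨅ y, g y + (((2 * lam)⁻¹ * ‖y - (x - lam • gradient f x)‖ ^ 2 : ℝ) : EReal)) +
        ((δ : ℝ) : EReal)) :
    ((f p - δ : ℝ) : EReal) + g p ≤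
      ((f x - lam / 2 * ‖gradient f x‖ ^ 2 : ℝ) : EReal) +
        (⨅ y, g y + (((2 * lam)⁻¹ * ‖y - (x - lam • gradient f x)‖ ^ 2 : ℝ) : EReal)) := by
  set u := gradient f x with hu
  set c : ℝ := (2 * lam)⁻¹ * ‖p - (x - lam • u)‖ ^ 2 with hcdef
  set e : EReal := ⨅ y, g y + (((2 * lam)⁻¹ * ‖y - (x - lam • u)‖ ^ 2 : ℝ) : EReal) with he
  -- the key real inequality
  have hkey : f p ≤ f x - lam / 2 * ‖u‖ ^ 2 + c := by
    have hdesc := descent_lemma f hf L hL.le hlip x p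
    have hexp : c = (2 * lam)⁻¹ * ‖p - x‖ ^ 2 + ⟪u, p - x⟫ + lam / 2 * ‖u‖ ^ 2 := by
      have h1 : p - (x - lam • u) = (p - x) + lam • u := by abel
      rw [hcdef, h1, norm_add_sq_real]
      rw [real_inner_smul_right, norm_smul, Real.norm_eq_abs, abs_of_pos hlam,
        real_inner_comm]
      field_simp
    have hLc : L / 2 * ‖p - x‖ ^ 2 ≤ (2 * lam)⁻¹ * ‖p - x‖ ^ 2 := by
      have : L ≤ lam⁻¹ := by
        nlinarith [inv_mul_cancel₀ hlam.ne', inv_pos.mpr hlam]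
      have h2 : L / 2 ≤ (2 * lam)⁻¹ := by
        rw [mul_inv, inv_eq_one_div]
        nlinarith
      nlinarith [sq_nonneg ‖p - x‖]
    have := real_inner_comm u (p - x)
    rw [hexp]
    nlinarith
  -- EReal bookkeeping
  have hebot : e ≠ ⊥ := by
    intro hb
    rw [hb] at hp
    simp only [EReal.bot_add] at hp
    have := le_bot_iff.mp hp
    rcases EReal.add_eq_bot_iff.mp this with h | h
    · exact hproper.1 p h
    · exact EReal.coe_ne_bot _ h
  rcases eq_or_ne e ⊤ with htop | htop
  · rw [htop, EReal.add_top_of_ne_bot (EReal.coe_ne_bot _)]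
    exact le_top
  · lift e to ℝ using ⟨htop, hebot⟩ with r hr
    have hgp_top : g p ≠ ⊤ := by
      intro hgt
      rw [hgt, EReal.top_add_of_ne_bot (EReal.coe_ne_bot c), ← EReal.coe_add] at hp
      exact absurd hp (not_le.mpr (EReal.coe_lt_top _))
    lift g p to ℝ using ⟨hgp_top, hproper.1 p⟩ with s hs
    rw [← EReal.coe_add, ← EReal.coe_add, EReal.coe_le_coe_iff] at hp
    rw [← EReal.coe_add, ← EReal.coe_add, EReal.coe_le_coe_iff]
    linarith
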